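/- Let $G$ be a finite subgroup of the orthogonal group of $\mathbb{R}^d$ leaving the weight $w_k$ invariant (so that $\nu_k$ is $G$-invariant), and assume $\nu_k$ is doubling, i.e., there is $c_0 > 0$ with $\nu_k(B(x,2r)) \leq c_0\, \nu_k(B(x,r))$ for all $x$ and $r > 0$. Let $T$ be a linear operator bounded on $L^2(\nu_k)$ with $\|Tf\|_{L^2(\nu_k)} \leq M \|f\|_{L^2(\nu_k)}$, and let $K : \mathbb{R}^d \times \mathbb{R}^d \to \mathbb{R}$ be a measurable kernel such that: (i) for every compactly supported $f \in L^2(\nu_k)$ and every $x$ with $g\cdot x \notin \mathrm{supp}(f)$ for all $g \in G$, $Tf(x) = \int_{\mathbb{R}^d} K(x,y) f(y)\, d\nu_k(y)$; and (ii) there is $A > 0$ with $\int_{\{x : \min_{g \in G}\|g\cdot x - y\| > 2\|y - y_0\|\}} |K(x,y) - K(x,y_0)|\, d\nu_k(x) \leq A$ for all $y, y_0 \in \mathbb{R}^d$. Then there is a constant $c > 0$ (depending only on $M$, $A$, $c_0$ and the order of $G$) such that $\|Ta\|_{L^1(\nu_k)} \leq c$ for every $L^2_k$-atom $a$. -/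

import Mathlib

open MeasureTheory Metric Filter Topology Set
open scoped ENNReal NNReal

noncomputable section

/-- Cauchy–Schwarz for the lower Lebesgue integral, no measurability needed. -/
private lemma lintegral_CS {α : Type*} [MeasurableSpace α] (μ : Measure α) (f : α → ℝ≥0∞) :
    ∫⁻ x, f x ∂μ ≤ (μ Set.univ) ^ ((1:ℝ)/2) * (∫⁻ x, f x ^ (2:ℝ) ∂μ) ^ ((1:ℝ)/2) := by
  obtain ⟨g, gm, gle, geq⟩ := exists_measurable_le_lintegral_eq μ f
  rw [geq]
  have h22 : (2:ℝ).HolderConjugate 2 := Real.HolderConjugate.two_two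
  have H := ENNReal.lintegral_mul_le_Lp_mul_Lq μ h22 (f := fun _ => (1:ℝ≥0∞)) (g := g)
    aemeasurable_const gm.aemeasurable
  simp only [Pi.mul_apply, one_mul, ENNReal.one_rpow, lintegral_const, one_div] at H
  calc ∫⁻ x, g x ∂μ ≤ (μ Set.univ) ^ ((2:ℝ)⁻¹) * (∫⁻ x, g x ^ (2:ℝ) ∂μ) ^ ((2:ℝ)⁻¹) := by
        simpa using H
    _ ≤ (μ Set.univ) ^ ((1:ℝ)/2) * (∫⁻ x, f x ^ (2:ℝ) ∂μ) ^ ((1:ℝ)/2) := by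
        rw [one_div]
        exact mul_le_mul_right (ENNReal.rpow_le_rpow
          (lintegral_mono fun x => ENNReal.rpow_le_rpow (gle x) (by norm_num))
          (by norm_num)) _

/-- The Dunkl weight function. -/
def dunklWeight {d : ℕ} (Rp : Finset (EuclideanSpace ℝ (Fin d)))
    (k : EuclideanSpace ℝ (Fin d) → ℝ) (x : EuclideanSpace ℝ (Fin d)) : ℝ :=
  ∏ ξ ∈ Rp, |(inner ℝ ξ x : ℝ)| ^ (2 * k ξ)

/-- The weighted measure `ν_k`. -/
def dunklMeasure {d : ℕ} (Rp : Finset (EuclideanSpace ℝ (Fin d)))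
    (k : EuclideanSpace ℝ (Fin d) → ℝ) : Measure (EuclideanSpace ℝ (Fin d)) :=
  volume.withDensity fun x => ENNReal.ofReal (dunklWeight Rp k x)

private lemma dunklWeight_continuous {d : ℕ} (Rp : Finset (EuclideanSpace ℝ (Fin d)))
    (k : EuclideanSpace ℝ (Fin d) → ℝ) (hk : ∀ ξ ∈ Rp, 0 ≤ k ξ) :
    Continuous (dunklWeight Rp k) := by
  unfold dunklWeight
  refine continuous_finset_prod _ fun ξ hξ => ?_
  exact ((continuous_const.inner continuous_id).abs).rpow_const
    fun x => Or.inr (by have := hk ξ hξ; positivity)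

private lemma dunklMeasure_closedBall_lt_top {d : ℕ} (Rp : Finset (EuclideanSpace ℝ (Fin d)))
    (k : EuclideanSpace ℝ (Fin d) → ℝ) (hk : ∀ ξ ∈ Rp, 0 ≤ k ξ)
    (x : EuclideanSpace ℝ (Fin d)) (R : ℝ) :
    dunklMeasure Rp k (closedBall x R) < ⊤ := by
  obtain ⟨C, hC⟩ : BddAbove (dunklWeight Rp k '' closedBall x R) :=
    (isCompact_closedBall x R).bddAbove_image
      ((dunklWeight_continuous Rp k hk).continuousOn)
  have hCle : ∀ y ∈ closedBall x R, dunklWeight Rp k y ≤ C :=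
    fun y hy => hC (Set.mem_image_of_mem _ hy)
  rw [dunklMeasure, withDensity_apply _ measurableSet_closedBall]
  calc ∫⁻ y in closedBall x R, ENNReal.ofReal (dunklWeight Rp k y) ∂volume
      ≤ ∫⁻ _ in closedBall x R, ENNReal.ofReal C ∂volume := by
        refine setLIntegral_mono' measurableSet_closedBall fun y hy => ?_
        exact ENNReal.ofReal_le_ofReal (hCle y hy)
    _ = ENNReal.ofReal C * volume (closedBall x R) := by
        simp [Measure.restrict_apply, mul_comm]
    _ < ⊤ := ENNReal.mul_lt_top ENNReal.ofReal_lt_top measure_closedBall_lt_top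

private lemma dunklMeasure_preimage {d : ℕ} (Rp : Finset (EuclideanSpace ℝ (Fin d)))
    (k : EuclideanSpace ℝ (Fin d) → ℝ)
    (g : EuclideanSpace ℝ (Fin d) ≃ₗᵢ[ℝ] EuclideanSpace ℝ (Fin d))
    (hg : ∀ x, dunklWeight Rp k (g x) = dunklWeight Rp k x)
    {S : Set (EuclideanSpace ℝ (Fin d))} (hS : MeasurableSet S) :
    dunklMeasure Rp k (⇑g ⁻¹' S) = dunklMeasure Rp k S := by
  have hgm : MeasurableEmbedding (⇑g) := g.toMeasurableEquiv.measurableEmbedding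
  rw [dunklMeasure, withDensity_apply _ (hgm.measurable hS),
    withDensity_apply _ hS]
  calc ∫⁻ y in ⇑g ⁻¹' S, ENNReal.ofReal (dunklWeight Rp k y) ∂volume
      = ∫⁻ y in ⇑g ⁻¹' S, ENNReal.ofReal (dunklWeight Rp k (g y)) ∂volume := by
        refine setLIntegral_congr_fun (hgm.measurable hS) (fun y _ => ?_)
        rw [hg y]
    _ = ∫⁻ y in S, ENNReal.ofReal (dunklWeight Rp k y) ∂volume :=
        (g.measurePreserving).setLIntegral_comp_preimage_emb hgm
          (fun y => ENNReal.ofReal (dunklWeight Rp k y)) S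

private lemma eLpNorm_two_eq_lintegral {α : Type*} [MeasurableSpace α] (μ : Measure α)
    (f : α → ℝ) :
    eLpNorm f 2 μ = (∫⁻ x, ((‖f x‖₊ : ℝ≥0∞)) ^ (2:ℝ) ∂μ) ^ ((1:ℝ)/2) := by
  rw [eLpNorm_eq_lintegral_rpow_enorm_toReal two_ne_zero ENNReal.ofNat_ne_top]
  simp only [enorm_eq_nnnorm]
  norm_num

private lemma eLpNorm_two_eq_integral {α : Type*} [MeasurableSpace α] {μ : Measure α}
    {f : α → ℝ} (hf : MemLp f 2 μ) :
    eLpNorm f 2 μ = ENNReal.ofReal ((∫ x, |f x| ^ 2 ∂μ) ^ ((1:ℝ)/2)) := by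
  have hInt2 : Integrable (fun x => |f x| ^ 2) μ := by
    have := hf.integrable_norm_rpow two_ne_zero ENNReal.ofNat_ne_top
    simpa [Real.norm_eq_abs, ENNReal.toReal_ofNat,
      Real.rpow_natCast, Real.rpow_two] using this
  have h1 : ∫⁻ x, ((‖f x‖₊ : ℝ≥0∞)) ^ (2:ℝ) ∂μ = ENNReal.ofReal (∫ x, |f x| ^ 2 ∂μ) := by
    rw [ofReal_integral_eq_lintegral_ofReal hInt2 (.of_forall fun x => by positivity)]
    refine lintegral_congr fun x => ?_
    rw [← enorm_eq_nnnorm, ← ofReal_norm,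
      ENNReal.ofReal_rpow_of_nonneg (norm_nonneg _) (by norm_num)]
    congr 1
    rw [Real.norm_eq_abs, Real.rpow_two]
  rw [eLpNorm_two_eq_lintegral, h1, ENNReal.ofReal_rpow_of_nonneg
    (integral_nonneg fun x => by positivity) (by norm_num)]

/-- An `L²_k`-atom supported in the closed ball of center `x₀` and radius `r`. -/
def IsL2Atom {d : ℕ} (ν : Measure (EuclideanSpace ℝ (Fin d)))
    (a : EuclideanSpace ℝ (Fin d) → ℝ) (x₀ : EuclideanSpace ℝ (Fin d)) (r : ℝ) : Prop :=
  MemLp a 2 ν ∧ Function.support a ⊆ closedBall x₀ r ∧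
    (∫ x, |a x| ^ 2 ∂ν) ^ ((1 : ℝ)/2) ≤ (ν (closedBall x₀ r)).toReal ^ (-(1 : ℝ)/2) ∧
    ∫ x in closedBall x₀ r, a x ∂ν = 0

set_option maxHeartbeats 1000000 in
/-- Abstract form of Lemma 3.1: if `T` is `L²(ν_k)`-bounded and has, away from the `G`-orbit of
the support, an integral representation by a kernel `K` satisfying the Hörmander-type condition
adapted to the finite group `G` of isometries leaving `w_k` invariant, and if `ν_k` is doubling,
then `‖T a‖_{L¹(ν_k)}` is bounded by a constant uniformly over all `L²_k`-atoms `a`. -/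
theorem atom_L1_bound_of_CZ_kernel {d : ℕ} (hd : 0 < d)
    (Rp : Finset (EuclideanSpace ℝ (Fin d))) (hRp : ∀ ξ ∈ Rp, ξ ≠ 0)
    (k : EuclideanSpace ℝ (Fin d) → ℝ) (hk : ∀ ξ ∈ Rp, 0 ≤ k ξ)
    (G : Subgroup (EuclideanSpace ℝ (Fin d) ≃ₗᵢ[ℝ] EuclideanSpace ℝ (Fin d)))
    (hGfin : (G : Set (EuclideanSpace ℝ (Fin d) ≃ₗᵢ[ℝ] EuclideanSpace ℝ (Fin d))).Finite)
    (hGinv : ∀ g ∈ G, ∀ x, dunklWeight Rp k (g x) = dunklWeight Rp k x)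
    (c₀ : ℝ) (hc₀ : 0 < c₀)
    (hdoubling : ∀ (x : EuclideanSpace ℝ (Fin d)) (r : ℝ), 0 < r →
      (dunklMeasure Rp k) (closedBall x (2 * r))
        ≤ ENNReal.ofReal c₀ * (dunklMeasure Rp k) (closedBall x r))
    (T : (EuclideanSpace ℝ (Fin d) → ℝ) →ₗ[ℝ] (EuclideanSpace ℝ (Fin d) → ℝ))
    (M : ℝ) (hM : 0 < M)
    (hL2 : ∀ f : EuclideanSpace ℝ (Fin d) → ℝ, MemLp f 2 (dunklMeasure Rp k) →
      eLpNorm (T f) 2 (dunklMeasure Rp k) ≤ ENNReal.ofReal M * eLpNorm f 2 (dunklMeasure Rp k))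
    (K : EuclideanSpace ℝ (Fin d) → EuclideanSpace ℝ (Fin d) → ℝ)
    (hKmeas : Measurable (Function.uncurry K))
    (hrepr : ∀ f : EuclideanSpace ℝ (Fin d) → ℝ, MemLp f 2 (dunklMeasure Rp k) →
      HasCompactSupport f → ∀ x : EuclideanSpace ℝ (Fin d),
        (∀ g ∈ G, g x ∉ Function.support f) →
          T f x = ∫ y, K x y * f y ∂(dunklMeasure Rp k))
    (A : ℝ) (hA : 0 < A)
    (hHormander : ∀ y y₀ : EuclideanSpace ℝ (Fin d),
      ∫⁻ x in {x : EuclideanSpace ℝ (Fin d) | ∀ g ∈ G, 2 * ‖y - y₀‖ < ‖g x - y‖},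
          ENNReal.ofReal |K x y - K x y₀| ∂(dunklMeasure Rp k) ≤ ENNReal.ofReal A) :
    ∃ c : ℝ, 0 < c ∧ ∀ (a : EuclideanSpace ℝ (Fin d) → ℝ)
      (x₀ : EuclideanSpace ℝ (Fin d)) (r : ℝ), 0 < r →
        IsL2Atom (dunklMeasure Rp k) a x₀ r →
          eLpNorm (T a) 1 (dunklMeasure Rp k) ≤ ENNReal.ofReal c := by
  classical
  set ν := dunklMeasure Rp k with hνdef
  set N : ℕ := hGfin.toFinset.card with hN
  set cLoc : ℝ := ((N : ℝ) * c₀ ^ 2) ^ ((1:ℝ)/2) * M with hcLoc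
  have hcLoc0 : 0 ≤ cLoc := mul_nonneg (Real.rpow_nonneg (by positivity) _) hM.le
  refine ⟨cLoc + A, by linarith, ?_⟩
  intro a x₀ r hr hatom
  obtain ⟨haL2, hsupp, hnorm, hzero⟩ := hatom
  set B : Set (EuclideanSpace ℝ (Fin d)) := closedBall x₀ r with hB
  set B3 : Set (EuclideanSpace ℝ (Fin d)) := closedBall x₀ (3*r) with hB3
  have hBfin : ν B ≠ ⊤ := (dunklMeasure_closedBall_lt_top Rp k hk x₀ r).ne
  have haz : ∀ x, x ∉ B → a x = 0 := by
    intro x hx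
    by_contra h
    exact hx (hsupp (Function.mem_support.2 h))
  -- the enlarged set
  set O : Set (EuclideanSpace ℝ (Fin d)) := ⋃ g ∈ hGfin.toFinset, ⇑g ⁻¹' B3 with hO
  have hOmeas : MeasurableSet O :=
    MeasurableSet.biUnion hGfin.toFinset.countable_toSet
      (fun g _ => measurableSet_closedBall.preimage g.continuous.measurable)
  have hOx : ∀ x, x ∉ O → ∀ g ∈ G, 3 * r < dist (g x) x₀ := by
    intro x hx g hg
    by_contra h
    push_neg at h
    exact hx (Set.mem_iUnion₂.2 ⟨g, hGfin.mem_toFinset.2 hg, Set.mem_preimage.2 (mem_closedBall.2 h)⟩)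
  -- measure of O
  have hOν : ν O ≤ ENNReal.ofReal ((N : ℝ) * c₀ ^ 2) * ν B := by
    calc ν O ≤ ∑ g ∈ hGfin.toFinset, ν (⇑g ⁻¹' B3) := measure_biUnion_finset_le _ _
      _ = ∑ _g ∈ hGfin.toFinset, ν B3 := Finset.sum_congr rfl fun g hg =>
          dunklMeasure_preimage Rp k g (hGinv g (hGfin.mem_toFinset.1 hg))
            measurableSet_closedBall
      _ = (N : ℝ≥0∞) * ν B3 := by rw [Finset.sum_const, nsmul_eq_mul]
      _ ≤ (N : ℝ≥0∞) * (ENNReal.ofReal c₀ * (ENNReal.ofReal c₀ * ν B)) := by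
          refine mul_le_mul_right ?_ _
          calc ν B3 ≤ ν (closedBall x₀ (2*(2*r))) :=
                measure_mono (closedBall_subset_closedBall (by linarith))
            _ ≤ ENNReal.ofReal c₀ * ν (closedBall x₀ (2*r)) :=
                hdoubling x₀ (2*r) (by linarith)
            _ ≤ ENNReal.ofReal c₀ * (ENNReal.ofReal c₀ * ν B) :=
                mul_le_mul_right (hdoubling x₀ r hr) _
      _ = ENNReal.ofReal ((N : ℝ) * c₀ ^ 2) * ν B := by
          rw [ENNReal.ofReal_mul (Nat.cast_nonneg _), ENNReal.ofReal_natCast,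
            ENNReal.ofReal_pow hc₀.le]
          ring
  -- L² norm of the atom
  have hEa : eLpNorm a 2 ν ≤ ENNReal.ofReal ((ν B).toReal ^ (-(1:ℝ)/2)) := by
    rw [eLpNorm_two_eq_integral haL2]
    exact ENNReal.ofReal_le_ofReal hnorm
  have hkey : (ν B) ^ ((1:ℝ)/2) * ENNReal.ofReal ((ν B).toReal ^ (-(1:ℝ)/2)) ≤ 1 := by
    rcases eq_or_ne (ν B) 0 with h0 | h0
    · rw [h0, ENNReal.zero_rpow_of_pos (by norm_num), zero_mul]
      exact zero_le_one
    · have htR : 0 < (ν B).toReal := ENNReal.toReal_pos h0 hBfin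
      rw [← ENNReal.ofReal_rpow_of_pos htR, ENNReal.ofReal_toReal hBfin,
        ← ENNReal.rpow_add _ _ h0 hBfin]
      norm_num
  have hTa2 : eLpNorm (T a) 2 ν ≤
      ENNReal.ofReal M * ENNReal.ofReal ((ν B).toReal ^ (-(1:ℝ)/2)) :=
    (hL2 a haL2).trans (mul_le_mul_right hEa _)
  have hcs : HasCompactSupport a :=
    HasCompactSupport.intro (isCompact_closedBall x₀ r) haz
  have hInta : Integrable a ν := memLp_one_iff_integrable.mp
    (haL2.mono_exponent_of_measure_support_ne_top haz hBfin one_le_two)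
  have hzero' : ∫ x, a x ∂ν = 0 := by
    rw [← setIntegral_eq_integral_of_forall_compl_eq_zero haz]
    exact hzero
  -- measurable representative of the atom
  set a' : EuclideanSpace ℝ (Fin d) → ℝ := B.indicator (haL2.1.mk a) with ha'def
  have ha'meas : Measurable a' :=
    (haL2.1.measurable_mk).indicator measurableSet_closedBall
  have ha'ae : a' =ᵐ[ν] a := by
    have h1 : B.indicator (haL2.1.mk a) =ᵐ[ν] B.indicator a :=
      indicator_eventuallyEq
        ((haL2.1.ae_eq_mk.symm).filter_mono inf_le_left) EventuallyEq.rfl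
    have h2 : B.indicator a = a := Set.indicator_eq_self.2 hsupp
    exact h1.trans (by rw [h2])
  have ha'zero : ∀ y, y ∉ B → a' y = 0 := fun y hy => Set.indicator_of_notMem hy _
  -- L¹ bound for the atom
  have hL1a : ∫⁻ y, (‖a y‖₊ : ℝ≥0∞) ∂ν ≤ 1 := by
    have hsupp' : Function.support (fun y => ((‖a y‖₊ : ℝ≥0∞))) ⊆ B := by
      intro y hy
      by_contra h
      apply hy
      simp [haz y h]
    calc ∫⁻ y, (‖a y‖₊ : ℝ≥0∞) ∂ν = ∫⁻ y in B, (‖a y‖₊ : ℝ≥0∞) ∂ν :=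
          (setLIntegral_eq_of_support_subset hsupp').symm
      _ ≤ ((ν.restrict B) Set.univ) ^ ((1:ℝ)/2)
            * (∫⁻ y in B, ((‖a y‖₊ : ℝ≥0∞)) ^ (2:ℝ) ∂ν) ^ ((1:ℝ)/2) :=
          lintegral_CS _ _
      _ ≤ (ν B) ^ ((1:ℝ)/2) * eLpNorm a 2 ν := by
          rw [Measure.restrict_apply_univ, eLpNorm_two_eq_lintegral]
          exact mul_le_mul_right (ENNReal.rpow_le_rpow
            (lintegral_mono' Measure.restrict_le_self le_rfl) (by norm_num)) _
      _ ≤ (ν B) ^ ((1:ℝ)/2) * ENNReal.ofReal ((ν B).toReal ^ (-(1:ℝ)/2)) :=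
          mul_le_mul_right hEa _
      _ ≤ 1 := hkey
  -- pointwise bound outside O
  have hfar_pt : ∀ x, x ∉ O → (‖T a x‖₊ : ℝ≥0∞) ≤
      ∫⁻ y, ENNReal.ofReal |K x y - K x x₀| * (‖a' y‖₊ : ℝ≥0∞) ∂ν := by
    intro x hx
    have hTx : T a x = ∫ y, K x y * a y ∂ν := by
      refine hrepr a haL2 hcs x fun g hg hmem => ?_
      have h1 : dist (g x) x₀ ≤ r := mem_closedBall.1 (hsupp hmem)
      have h2 := hOx x hx g hg
      linarith
    by_cases hKi : Integrable (fun y => K x y * a y) ν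
    · have heq : (fun y => (K x y - K x x₀) * a y)
          = fun y => K x y * a y - K x x₀ * a y := by funext y; ring
      have hTx2 : T a x = ∫ y, (K x y - K x x₀) * a y ∂ν := by
        rw [hTx, heq, integral_sub hKi (hInta.const_mul _), integral_const_mul,
          hzero', mul_zero, sub_zero]
      rw [hTx2]
      calc (‖∫ y, (K x y - K x x₀) * a y ∂ν‖₊ : ℝ≥0∞)
          ≤ ∫⁻ y, (‖(K x y - K x x₀) * a y‖₊ : ℝ≥0∞) ∂ν :=
            enorm_integral_le_lintegral_enorm _
        _ = ∫⁻ y, ENNReal.ofReal |K x y - K x x₀| * (‖a y‖₊ : ℝ≥0∞) ∂ν :=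
            lintegral_congr fun y => by
              rw [nnnorm_mul, ENNReal.coe_mul, ← enorm_eq_nnnorm, Real.enorm_eq_ofReal_abs]
        _ = ∫⁻ y, ENNReal.ofReal |K x y - K x x₀| * (‖a' y‖₊ : ℝ≥0∞) ∂ν :=
            lintegral_congr_ae (ha'ae.mono fun y hy => by simp only [hy])
    · have hT0 : T a x = 0 := by rw [hTx, integral_undef hKi]
      simp [hT0]
  -- s-finiteness
  have hsf : SFinite ν := by
    rw [hνdef]; unfold dunklMeasure; infer_instance
  -- far estimate
  have hfar : ∫⁻ x in Oᶜ, (‖T a x‖₊ : ℝ≥0∞) ∂ν ≤ ENNReal.ofReal A := by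
    have hFmeas : Measurable (Function.uncurry fun x y =>
        ENNReal.ofReal |K x y - K x x₀| * (‖a' y‖₊ : ℝ≥0∞)) := by
      show Measurable fun p : EuclideanSpace ℝ (Fin d) × EuclideanSpace ℝ (Fin d) =>
        ENNReal.ofReal |K p.1 p.2 - K p.1 x₀| * (‖a' p.2‖₊ : ℝ≥0∞)
      exact (((hKmeas.sub
        (hKmeas.comp (measurable_fst.prodMk measurable_const))).abs).ennreal_ofReal).mul
        ((ha'meas.comp measurable_snd).enorm)
    calc ∫⁻ x in Oᶜ, (‖T a x‖₊ : ℝ≥0∞) ∂ν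
        ≤ ∫⁻ x in Oᶜ, ∫⁻ y, ENNReal.ofReal |K x y - K x x₀| * (‖a' y‖₊ : ℝ≥0∞) ∂ν ∂ν := by
          refine lintegral_mono_ae ?_
          rw [ae_restrict_iff' hOmeas.compl]
          exact .of_forall fun x hx => hfar_pt x hx
      _ = ∫⁻ y, ∫⁻ x in Oᶜ, ENNReal.ofReal |K x y - K x x₀| * (‖a' y‖₊ : ℝ≥0∞) ∂ν ∂ν :=
          lintegral_lintegral_swap hFmeas.aemeasurable
      _ ≤ ∫⁻ y, ENNReal.ofReal A * (‖a' y‖₊ : ℝ≥0∞) ∂ν := by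
          refine lintegral_mono fun y => ?_
          have hmx : Measurable fun x => ENNReal.ofReal |K x y - K x x₀| :=
            ((hKmeas.comp (measurable_id.prodMk measurable_const)).sub
              (hKmeas.comp (measurable_id.prodMk measurable_const))).abs.ennreal_ofReal
          rw [lintegral_mul_const _ hmx]
          by_cases hyB : y ∈ B
          · refine mul_le_mul_left ?_ _
            refine le_trans (lintegral_mono_set ?_) (hHormander y x₀)
            intro x hx
            intro g hg
            have h3 := hOx x hx g hg
            have h4 : dist y x₀ ≤ r := mem_closedBall.1 hyB
            have h5 := dist_triangle (g x) y x₀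
            rw [← dist_eq_norm, ← dist_eq_norm]
            linarith
          · simp [ha'zero y hyB]
      _ = ENNReal.ofReal A * ∫⁻ y, (‖a' y‖₊ : ℝ≥0∞) ∂ν :=
          lintegral_const_mul _ (ha'meas.enorm)
      _ = ENNReal.ofReal A * ∫⁻ y, (‖a y‖₊ : ℝ≥0∞) ∂ν := by
          congr 1
          exact lintegral_congr_ae (ha'ae.mono fun y hy => by simp only [hy])
      _ ≤ ENNReal.ofReal A * 1 := mul_le_mul_right hL1a _
      _ = ENNReal.ofReal A := mul_one _
  -- local estimate
  have hmulnn : (0:ℝ) ≤ (N : ℝ) * c₀ ^ 2 := mul_nonneg (Nat.cast_nonneg _) (sq_nonneg _)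
  have hloc : ∫⁻ x in O, (‖T a x‖₊ : ℝ≥0∞) ∂ν ≤ ENNReal.ofReal cLoc := by
    calc ∫⁻ x in O, (‖T a x‖₊ : ℝ≥0∞) ∂ν
        ≤ ((ν.restrict O) Set.univ) ^ ((1:ℝ)/2)
            * (∫⁻ x in O, ((‖T a x‖₊ : ℝ≥0∞)) ^ (2:ℝ) ∂ν) ^ ((1:ℝ)/2) := lintegral_CS _ _
      _ ≤ (ν O) ^ ((1:ℝ)/2) * eLpNorm (T a) 2 ν := by
          rw [Measure.restrict_apply_univ, eLpNorm_two_eq_lintegral]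
          exact mul_le_mul_right (ENNReal.rpow_le_rpow
            (lintegral_mono' Measure.restrict_le_self le_rfl) (by norm_num)) _
      _ ≤ (ENNReal.ofReal ((N : ℝ) * c₀ ^ 2) * ν B) ^ ((1:ℝ)/2)
            * (ENNReal.ofReal M * ENNReal.ofReal ((ν B).toReal ^ (-(1:ℝ)/2))) :=
          mul_le_mul' (ENNReal.rpow_le_rpow hOν (by norm_num)) hTa2
      _ = (ENNReal.ofReal ((N : ℝ) * c₀ ^ 2)) ^ ((1:ℝ)/2) * ENNReal.ofReal M
            * ((ν B) ^ ((1:ℝ)/2) * ENNReal.ofReal ((ν B).toReal ^ (-(1:ℝ)/2))) := by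
          rw [ENNReal.mul_rpow_of_nonneg _ _ (by norm_num)]
          ring
      _ ≤ (ENNReal.ofReal ((N : ℝ) * c₀ ^ 2)) ^ ((1:ℝ)/2) * ENNReal.ofReal M * 1 :=
          mul_le_mul_right hkey _
      _ = ENNReal.ofReal cLoc := by
          rw [mul_one, ENNReal.ofReal_rpow_of_nonneg hmulnn (by norm_num),
            ← ENNReal.ofReal_mul (Real.rpow_nonneg hmulnn _)]
  -- conclusion
  calc eLpNorm (T a) 1 ν = ∫⁻ x, (‖T a x‖₊ : ℝ≥0∞) ∂ν := eLpNorm_one_eq_lintegral_enorm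
    _ = ∫⁻ x in O, (‖T a x‖₊ : ℝ≥0∞) ∂ν + ∫⁻ x in Oᶜ, (‖T a x‖₊ : ℝ≥0∞) ∂ν :=
        (lintegral_add_compl _ hOmeas).symm
    _ ≤ ENNReal.ofReal cLoc + ENNReal.ofReal A := add_le_add hloc hfar
    _ = ENNReal.ofReal (cLoc + A) := (ENNReal.ofReal_add hcLoc0 hA.le).symm
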